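/- Let x and h be vectors in ℝⁿ, let α > 0, let S = supp(x) = {i : xᵢ ≠ 0} and Z = Sᶜ. Then ‖x + h‖₁ + (1/(2α))‖x + h‖₂² ≥ [‖x‖₁ + (1/(2α))‖x‖₂²] + [‖h_Z‖₁ − (1 + ‖x_S‖_∞/α)‖h_S‖₁] + (1/(2α))‖h‖₂². -/

import Mathlib

open Finset

/-- The `j`-th largest singular value (1-indexed) of a real matrix `A`, defined as the
`j`-th largest square root of an eigenvalue of `Aᵀ * A`; zero if `j` is out of range. -/
noncomputable def sval {m n : Type*} [Fintype m] [Fintype n] [DecidableEq n]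
    (A : Matrix m n ℝ) (j : ℕ) : ℝ :=
  let ev : Fin (Fintype.card n) → ℝ := fun i =>
    Real.sqrt ((show (A.transpose * A).IsHermitian by
      simpa [Matrix.conjTranspose_eq_transpose_of_trivial] using
        Matrix.isHermitian_conjTranspose_mul_self A).eigenvalues
      ((Fintype.equivFin n).symm i))
  if h : 1 ≤ j ∧ j ≤ Fintype.card n then
    ev (Tuple.sort ev ⟨Fintype.card n - j, by omega⟩)
  else 0

/-- The trace (nuclear) norm of a real matrix: the sum of its singular values. -/
noncomputable def nuclearNorm {m n : Type*} [Fintype m] [Fintype n] [DecidableEq n]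
    (A : Matrix m n ℝ) : ℝ :=
  ∑ j ∈ Finset.Icc 1 (min (Fintype.card m) (Fintype.card n)), sval A j

/-- The Frobenius norm of a real matrix. -/
noncomputable def matFrobNorm {m n : Type*} [Fintype m] [Fintype n]
    (A : Matrix m n ℝ) : ℝ :=
  Real.sqrt (∑ i, ∑ j, (A i j) ^ 2)

/-- The mode-`n` unfolding of an `N`-way tensor. -/
def tunfold {N : ℕ} {I : Fin N → ℕ} (X : (∀ n, Fin (I n)) → ℝ) (n : Fin N) :
    Matrix (Fin (I n)) (∀ k : {k : Fin N // k ≠ n}, Fin (I k.1)) ℝ :=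
  Matrix.of fun i c =>
    X (fun k => if h : k = n then cast (congrArg (fun t => Fin (I t)) h.symm) i else c ⟨k, h⟩)

/-- The tensor trace norm: the average of the nuclear norms of the mode-`n` unfoldings. -/
noncomputable def tensorNuclearNorm {N : ℕ} {I : Fin N → ℕ} (X : (∀ n, Fin (I n)) → ℝ) : ℝ :=
  (1 / (N : ℝ)) * ∑ n : Fin N, nuclearNorm (tunfold X n)

/-- The Frobenius norm of a tensor. -/
noncomputable def tensorFrobNorm {N : ℕ} {I : Fin N → ℕ} (X : (∀ n, Fin (I n)) → ℝ) : ℝ :=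
  Real.sqrt (∑ t, X t ^ 2)

/-- The restriction of a vector to an index set (other coordinates set to zero). -/
def vrestrict {n : ℕ} (v : Fin n → ℝ) (T : Finset (Fin n)) : Fin n → ℝ :=
  fun i => if i ∈ T then v i else 0

/-- The sup (infinity) norm of a vector. -/
noncomputable def vecInfNorm {n : ℕ} (v : Fin n → ℝ) : ℝ :=
  ⨆ i, |v i|

/-- Augmented `ℓ₁` perturbation inequality: with `S = supp x`, `Z = Sᶜ` and `α > 0`,
`‖x+h‖₁ + ‖x+h‖₂²/(2α) ≥ [‖x‖₁ + ‖x‖₂²/(2α)] + [‖h_Z‖₁ - (1 + ‖x_S‖_∞/α)‖h_S‖₁] + ‖h‖₂²/(2α)`. -/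
theorem l1_l2_augmented_add_ge_support_split
    {n : ℕ} (x h : Fin n → ℝ) (α : ℝ) (hα : 0 < α) :
    ((∑ i, |x i|) + (1 / (2 * α)) * ∑ i, x i ^ 2)
        + ((∑ i ∈ {i : Fin n | x i ≠ 0}ᶜ.toFinset, |h i|)
            - (1 + vecInfNorm (vrestrict x {i : Fin n | x i ≠ 0}.toFinset) / α) *
                ∑ i ∈ {i : Fin n | x i ≠ 0}.toFinset, |h i|)
        + (1 / (2 * α)) * ∑ i, h i ^ 2 ≤
      (∑ i, |x i + h i|) + (1 / (2 * α)) * ∑ i, (x i + h i) ^ 2 := by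
  classical
  set S : Finset (Fin n) := {i : Fin n | x i ≠ 0}.toFinset with hS
  set M := vecInfNorm (vrestrict x S) with hMdef
  have hScompl : ({i : Fin n | x i ≠ 0}ᶜ.toFinset : Finset (Fin n)) = Sᶜ := by
    ext i; simp [hS, Set.mem_toFinset]
  have hM0 : 0 ≤ M := Real.iSup_nonneg (fun i => abs_nonneg _)
  have hMi : ∀ i ∈ S, |x i| ≤ M := by
    intro i hi
    have hle : |vrestrict x S i| ≤ ⨆ j, |vrestrict x S j| :=
      le_ciSup (Set.Finite.bddAbove (Set.finite_range fun j => |vrestrict x S j|)) i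
    simpa [vrestrict, hi, hMdef, vecInfNorm] using hle
  have hxz : ∀ i ∈ Sᶜ, x i = 0 := by
    intro i hi
    have : i ∉ S := Finset.mem_compl.mp hi
    simpa [hS, Set.mem_toFinset] using this
  rw [hScompl]
  rw [← Finset.sum_add_sum_compl S (fun i => |x i + h i|),
      ← Finset.sum_add_sum_compl S (fun i => (x i + h i) ^ 2),
      ← Finset.sum_add_sum_compl S (fun i => |x i|),
      ← Finset.sum_add_sum_compl S (fun i => x i ^ 2),
      ← Finset.sum_add_sum_compl S (fun i => h i ^ 2)]
  have e1 : ∑ i ∈ Sᶜ, |x i| = 0 :=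
    Finset.sum_eq_zero (fun i hi => by simp [hxz i hi])
  have e2 : ∑ i ∈ Sᶜ, x i ^ 2 = 0 :=
    Finset.sum_eq_zero (fun i hi => by simp [hxz i hi])
  have e3 : ∑ i ∈ Sᶜ, |x i + h i| = ∑ i ∈ Sᶜ, |h i| :=
    Finset.sum_congr rfl (fun i hi => by rw [hxz i hi, zero_add])
  have e4 : ∑ i ∈ Sᶜ, (x i + h i) ^ 2 = ∑ i ∈ Sᶜ, h i ^ 2 :=
    Finset.sum_congr rfl (fun i hi => by rw [hxz i hi, zero_add])
  rw [e1, e2, e3, e4]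
  have key : ∑ i ∈ S, |x i| + (1 / (2 * α)) * ∑ i ∈ S, x i ^ 2
      - (1 + M / α) * ∑ i ∈ S, |h i| + (1 / (2 * α)) * ∑ i ∈ S, h i ^ 2
      ≤ ∑ i ∈ S, |x i + h i| + (1 / (2 * α)) * ∑ i ∈ S, (x i + h i) ^ 2 := by
    have hpt : ∀ i ∈ S,
        |x i| + (1 / (2 * α)) * x i ^ 2 - (1 + M / α) * |h i|
          + (1 / (2 * α)) * h i ^ 2
        ≤ |x i + h i| + (1 / (2 * α)) * (x i + h i) ^ 2 := by
      intro i hi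
      have h1 : |x i| - |h i| ≤ |x i + h i| := by
        have := abs_sub_abs_le_abs_sub (x i) (-h i)
        simpa [sub_neg_eq_add] using this
      have h2 : -(M * |h i|) ≤ x i * h i := by
        have habs : |x i * h i| ≤ M * |h i| := by
          rw [abs_mul]
          exact mul_le_mul_of_nonneg_right (hMi i hi) (abs_nonneg _)
        have := neg_abs_le (x i * h i)
        linarith
      have h2' : (1 / α) * (-(M * |h i|)) ≤ (1 / α) * (x i * h i) :=
        mul_le_mul_of_nonneg_left h2 (by positivity)
      have hc : (1 / (2 * α)) * (x i + h i) ^ 2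
          = (1 / (2 * α)) * x i ^ 2 + (1 / α) * (x i * h i)
            + (1 / (2 * α)) * h i ^ 2 := by
        field_simp; ring
      have hid : (1 + M / α) * |h i| = |h i| + (1 / α) * (M * |h i|) := by
        field_simp
      rw [hc, hid]
      linarith
    have := Finset.sum_le_sum hpt
    simpa [Finset.sum_add_distrib, Finset.sum_sub_distrib, Finset.mul_sum,
      sub_eq_add_neg, add_assoc, add_comm, add_left_comm] using this
  linarith [key]
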